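/- Let P, P̃, i₀, j₀ be as in the construction where P̃ increases entry i₀ of rows i₀, …, j₀−1 of P by 1. Let P' be any integral GT pattern with the same bounding sequence satisfying P' ≥ P̃, and let P'' be obtained from P' by decreasing by 1 exactly one entry in each of the rows i₀, …, j₀−1, assuming P'' is again a valid GT pattern. Then P'' ≥ P in the row-wise dominance order. -/
import Mathlib


/-- A Gelfand–Tsetlin pattern for `sl_{r+1}`: rows are indexed `1,…,r+1`,
row `j` has entries `P j 1 ≥ … ≥ P j j`, with the interlacing condition
`P j i ≥ P (j-1) i ≥ P j (i+1)` for `1 ≤ i < j ≤ r+1`. -/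
def IsGTPattern (r : ℕ) (P : ℕ → ℕ → ℤ) : Prop :=
  ∀ i j, 1 ≤ i → i < j → j ≤ r + 1 → P (j-1) i ≤ P j i ∧ P j (i+1) ≤ P (j-1) i

/-- The bounding sequence (last row) of the pattern is `lam`. -/
def Bounded (r : ℕ) (P : ℕ → ℕ → ℤ) (lam : ℕ → ℤ) : Prop :=
  ∀ i, 1 ≤ i → i ≤ r + 1 → P (r+1) i = lam i

/-- Row-wise dominance: `Dom r P' P` means the partial row sums of `P'`
dominate those of `P` in every row. -/
def Dom (r : ℕ) (P' P : ℕ → ℕ → ℤ) : Prop :=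
  ∀ j i, 1 ≤ i → i ≤ j → j ≤ r + 1 →
    ∑ s ∈ Finset.Icc 1 i, P j s ≤ ∑ s ∈ Finset.Icc 1 i, P' j s

/-- The `k`-th coordinate of the weight of a pattern: difference of row sums. -/
def wt (P : ℕ → ℕ → ℤ) (k : ℕ) : ℤ :=
  (∑ i ∈ Finset.Icc 1 k, P k i) - ∑ i ∈ Finset.Icc 1 (k-1), P (k-1) i

/-- The length of a pattern. -/
def lengthP (r : ℕ) (P : ℕ → ℕ → ℤ) : ℤ :=
  ∑ j ∈ Finset.Icc 2 (r+1), ∑ i ∈ Finset.Icc 1 (j-1), (P j i - P (j-1) i)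

/-- If P' ≥ Pt is a GT pattern with the same bounding sequence and P'' is
obtained from P' by decreasing by 1 exactly one entry in each of the rows
i₀, …, j₀-1, and P'' is again a GT pattern, then P'' ≥ P in the row-wise
dominance order. -/
theorem doubleprime_dominates (r : ℕ) (lam : ℕ → ℤ) (P Pt : ℕ → ℕ → ℤ) (i₀ j₀ : ℕ)
    (hP : IsGTPattern r P) (hb : Bounded r P lam)
    (hlen : 0 < lengthP r P)
    (hj₀2 : 2 ≤ j₀) (hj₀r : j₀ ≤ r + 1)
    (hj₀d : ∃ i, 1 ≤ i ∧ i < j₀ ∧ P j₀ i ≠ P (j₀-1) i)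
    (hjmin : ∀ j, 2 ≤ j → j < j₀ → ∀ i, 1 ≤ i → i < j → P j i = P (j-1) i)
    (hi₀1 : 1 ≤ i₀) (hi₀j : i₀ < j₀) (hi₀d : P j₀ i₀ ≠ P (j₀-1) i₀)
    (himin : ∀ i, 1 ≤ i → i < i₀ → P j₀ i = P (j₀-1) i)
    (hPt : ∀ j i, Pt j i = if i = i₀ ∧ i₀ ≤ j ∧ j < j₀ then P j i + 1 else P j i)
    (P' P'' : ℕ → ℕ → ℤ) (c : ℕ → ℕ)
    (hP' : IsGTPattern r P') (hb' : Bounded r P' lam) (hdom : Dom r P' Pt)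
    (hc : ∀ j, i₀ ≤ j → j < j₀ → 1 ≤ c j ∧ c j ≤ j)
    (hP'' : ∀ j i, P'' j i =
      if i₀ ≤ j ∧ j < j₀ ∧ i = c j then P' j i - 1 else P' j i)
    (hP''pat : IsGTPattern r P'') :
    Dom r P'' P := by

  -- column constancy of P below row j₀
  have key1 : ∀ j s, 1 ≤ s → s ≤ j → j < j₀ → P j s = P s s := by
    intro j
    induction j with
    | zero => intro s h1 h2 _; omega
    | succ n ih =>
      intro s h1 h2 hj
      rcases eq_or_lt_of_le h2 with h | h
      · rw [h]
      · have := hjmin (n+1) (by omega) hj s h1 (by omega)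
        simp only [Nat.add_sub_cancel] at this
        rw [this, ih s h1 (by omega) (by omega)]
  -- prefix sums of P'' are monotone in the row index
  have mono : ∀ j i, 1 ≤ i → i < j → j ≤ r + 1 →
      ∑ s ∈ Finset.Icc 1 i, P'' (j-1) s ≤ ∑ s ∈ Finset.Icc 1 i, P'' j s := by
    intro j i h1 h2 h3
    apply Finset.sum_le_sum
    intro s hs
    simp only [Finset.mem_Icc] at hs
    exact (hP''pat s j hs.1 (by omega) h3).1
  have chain : ∀ j i, 1 ≤ i → i + 1 ≤ i₀ → i₀ - 1 ≤ j → j ≤ r + 1 →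
      ∑ s ∈ Finset.Icc 1 i, P'' (i₀-1) s ≤ ∑ s ∈ Finset.Icc 1 i, P'' j s := by
    intro j
    induction j with
    | zero => intro i h1 h2 h3 _; omega
    | succ n ih =>
      intro i h1 h2 h3 h4
      rcases eq_or_lt_of_le h3 with h | h
      · rw [h]
      · calc ∑ s ∈ Finset.Icc 1 i, P'' (i₀-1) s
            ≤ ∑ s ∈ Finset.Icc 1 i, P'' n s := ih i h1 h2 (by omega) (by omega)
          _ ≤ _ := by
              have := mono (n+1) i h1 (by omega) h4
              simpa using this
  intro j i h1 hij hjr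
  by_cases hcase : i₀ ≤ j ∧ j < j₀
  · by_cases hi : i₀ ≤ i
    · -- i ≥ i₀ : use Dom and lose at most 1
      have hPt_sum : ∑ s ∈ Finset.Icc 1 i, Pt j s
          = (∑ s ∈ Finset.Icc 1 i, P j s) + 1 := by
        calc ∑ s ∈ Finset.Icc 1 i, Pt j s
            = ∑ s ∈ Finset.Icc 1 i, (P j s + if s = i₀ then 1 else 0) := by
              refine Finset.sum_congr rfl fun s _ => ?_
              rw [hPt]
              by_cases h : s = i₀ <;> simp [h, hcase.1, hcase.2]
          _ = (∑ s ∈ Finset.Icc 1 i, P j s)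
              + ∑ s ∈ Finset.Icc 1 i, (if s = i₀ then (1:ℤ) else 0) := by
              rw [Finset.sum_add_distrib]
          _ = _ := by
              rw [Finset.sum_ite_eq' (Finset.Icc 1 i) i₀ (fun _ => (1:ℤ))]
              simp [Finset.mem_Icc, hi₀1, hi]
      have hP''_sum : (∑ s ∈ Finset.Icc 1 i, P' j s) - 1
          ≤ ∑ s ∈ Finset.Icc 1 i, P'' j s := by
        have e : ∑ s ∈ Finset.Icc 1 i, P'' j s
            = (∑ s ∈ Finset.Icc 1 i, P' j s)
              - ∑ s ∈ Finset.Icc 1 i, (if s = c j then (1:ℤ) else 0) := by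
          rw [← Finset.sum_sub_distrib]
          refine Finset.sum_congr rfl fun s _ => ?_
          rw [hP'']
          by_cases h : s = c j <;> simp [h, hcase.1, hcase.2]
        rw [e]
        have : ∑ s ∈ Finset.Icc 1 i, (if s = c j then (1:ℤ) else 0) ≤ 1 := by
          rw [Finset.sum_ite_eq' (Finset.Icc 1 i) (c j) (fun _ => (1:ℤ))]
          by_cases h : c j ∈ Finset.Icc 1 i <;> simp [h]
        linarith
      have hd := hdom j i h1 hij hjr
      rw [hPt_sum] at hd
      linarith
    · -- i < i₀ : chain down to row i₀ - 1
      push_neg at hi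
      have h10 : 2 ≤ i₀ := by omega
      have e1 : ∑ s ∈ Finset.Icc 1 i, P'' (i₀-1) s
          = ∑ s ∈ Finset.Icc 1 i, P' (i₀-1) s := by
        refine Finset.sum_congr rfl fun s _ => ?_
        rw [hP'']
        have : ¬ (i₀ ≤ i₀ - 1) := by omega
        simp [this]
      have e2 : ∑ s ∈ Finset.Icc 1 i, Pt (i₀-1) s
          = ∑ s ∈ Finset.Icc 1 i, P (i₀-1) s := by
        refine Finset.sum_congr rfl fun s _ => ?_
        rw [hPt]
        have : ¬ (i₀ ≤ i₀ - 1) := by omega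
        simp [this]
      have e3 : ∑ s ∈ Finset.Icc 1 i, P (i₀-1) s = ∑ s ∈ Finset.Icc 1 i, P j s := by
        refine Finset.sum_congr rfl fun s hs => ?_
        simp only [Finset.mem_Icc] at hs
        rw [key1 (i₀-1) s hs.1 (by omega) (by omega),
            key1 j s hs.1 (by omega) hcase.2]
      have hd := hdom (i₀-1) i h1 (by omega) (by omega)
      have hch := chain j i h1 (by omega) (by omega) hjr
      rw [e1] at hch
      rw [e2, e3] at hd
      linarith
  · -- rows untouched
    have e1 : ∑ s ∈ Finset.Icc 1 i, P'' j s = ∑ s ∈ Finset.Icc 1 i, P' j s := by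
      refine Finset.sum_congr rfl fun s _ => ?_
      rw [hP'']
      simp only [ite_eq_right_iff]
      intro h; exact absurd ⟨h.1, h.2.1⟩ hcase
    have e2 : ∑ s ∈ Finset.Icc 1 i, Pt j s = ∑ s ∈ Finset.Icc 1 i, P j s := by
      refine Finset.sum_congr rfl fun s _ => ?_
      rw [hPt]
      simp only [ite_eq_right_iff]
      intro h; exact absurd ⟨h.2.1, h.2.2⟩ hcase
    have hd := hdom j i h1 hij hjr
    rw [e2] at hd
    rw [e1]
    exact hd
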